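/- Let I be a finite index set, x : I → ℝ^d, β : I × I → ℝ symmetric (β_{ij} = β_{ji}), and m : I × I → ℝ^d symmetric (m_{ij} = m_{ji}). Assume that for every i the closedness condition Σ_{j≠i} β_{ij} (x_j − x_i) = 0 holds (discretely, ⟨∇*1⟩_i = 0 for every cell). Then for any field of d×d matrices T : I → M_d(ℝ), the total discrete force vanishes: Σ_i Σ_{j≠i} β_{ij} (T_i − T_j)(m_{ij} − x_i) = 0, i.e., Σ_i V_i ⟨div T⟩_i = 0 for any positive volumes V_i, so the semi-discrete scheme conserves linear momentum. -/

import Mathlib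

open Finset Matrix

/-- Discrete divergence of a matrix (stress) field:
`⟨div T⟩_i = −(1/V_i) Σ_{j≠i} β_{ij} (T_i − T_j)(m_{ij} − x_i)`. -/
noncomputable def discreteTensorDiv {d : ℕ} {I : Type*} [Fintype I] [DecidableEq I]
    (x : I → EuclideanSpace ℝ (Fin d)) (β : I → I → ℝ) (m : I → I → EuclideanSpace ℝ (Fin d))
    (V : I → ℝ) (T : I → Matrix (Fin d) (Fin d) ℝ) (i : I) : Fin d → ℝ :=
  (-(V i)⁻¹) • ∑ j ∈ Finset.univ.erase i, β i j • ((T i - T j) *ᵥ (fun k => m i j k - x i k))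

lemma sum_erase_swap {I M : Type*} [Fintype I] [DecidableEq I] [AddCommMonoid M]
    (f : I → I → M) :
    ∑ i : I, ∑ j ∈ Finset.univ.erase i, f i j
      = ∑ i : I, ∑ j ∈ Finset.univ.erase i, f j i := by
  rw [Finset.sum_comm' (s' := fun j => Finset.univ.erase j) (t' := Finset.univ)]
  intro a b
  simp only [Finset.mem_univ, Finset.mem_erase, true_and, and_true]
  exact ne_comm

lemma sum_erase_split {I : Type*} {M : Type*} [Fintype I] [DecidableEq I] [AddCommGroup M]
    (F G : I → I → M) :
    ∑ i : I, ∑ j ∈ Finset.univ.erase i, (F i j - G i j)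
      = (∑ i : I, ∑ j ∈ Finset.univ.erase i, F i j)
        - ∑ i : I, ∑ j ∈ Finset.univ.erase i, G i j := by
  rw [← Finset.sum_sub_distrib]
  exact Finset.sum_congr rfl fun i _ => Finset.sum_sub_distrib _ _

lemma total_force_aux {d : ℕ} {I : Type*} [Fintype I] [DecidableEq I]
    (x : I → EuclideanSpace ℝ (Fin d)) (β : I → I → ℝ) (m : I → I → EuclideanSpace ℝ (Fin d))
    (hβ : ∀ i j, β i j = β j i) (hm : ∀ i j, m i j = m j i)
    (hclosed : ∀ i : I, ∑ j ∈ Finset.univ.erase i, β i j • (x j - x i) = 0)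
    (T : I → Matrix (Fin d) (Fin d) ℝ) :
    (∑ i : I, ∑ j ∈ Finset.univ.erase i,
        β i j • ((T i - T j) *ᵥ (fun k => m i j k - x i k)) = 0) := by
  have hdec : ∀ i j : I, β i j • ((T i - T j) *ᵥ (fun k => m i j k - x i k))
      = (β i j • ((T i - T j) *ᵥ (m i j : Fin d → ℝ)))
        - (β i j • (T i *ᵥ (x i : Fin d → ℝ)) - β i j • (T j *ᵥ (x i : Fin d → ℝ))) := by
    intro i j
    have hv : (fun k => m i j k - x i k) = ((m i j : Fin d → ℝ) - (x i : Fin d → ℝ)) := rfl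
    have hs : (T i - T j) *ᵥ (x i : Fin d → ℝ)
        = T i *ᵥ (x i : Fin d → ℝ) - T j *ᵥ (x i : Fin d → ℝ) := sub_mulVec _ _ _
    rw [hv, mulVec_sub, smul_sub, hs, smul_sub]
  have hA : ∑ i : I, ∑ j ∈ Finset.univ.erase i,
      β i j • ((T i - T j) *ᵥ (m i j : Fin d → ℝ)) = 0 := by
    have h2 : ∀ i j : I, β j i • ((T j - T i) *ᵥ (m j i : Fin d → ℝ))
        = - (β i j • ((T i - T j) *ᵥ (m i j : Fin d → ℝ))) := by
      intro i j
      rw [← hβ, ← hm, ← neg_sub (T i) (T j), neg_mulVec, smul_neg]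
    have h := sum_erase_swap (fun i j => β i j • ((T i - T j) *ᵥ (m i j : Fin d → ℝ)))
    have h3 : (∑ i : I, ∑ j ∈ Finset.univ.erase i,
          (fun i j => β i j • ((T i - T j) *ᵥ (m i j : Fin d → ℝ))) j i)
        = - ∑ i : I, ∑ j ∈ Finset.univ.erase i,
            β i j • ((T i - T j) *ᵥ (m i j : Fin d → ℝ)) := by
      rw [← Finset.sum_neg_distrib]
      refine Finset.sum_congr rfl fun i _ => ?_
      rw [← Finset.sum_neg_distrib]
      exact Finset.sum_congr rfl fun j _ => h2 i j
    rw [h3] at h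
    exact self_eq_neg.mp h
  have hC : ∑ i : I, ∑ j ∈ Finset.univ.erase i, β i j • (T j *ᵥ (x i : Fin d → ℝ))
      = ∑ i : I, ∑ j ∈ Finset.univ.erase i, β i j • (T i *ᵥ (x j : Fin d → ℝ)) := by
    rw [sum_erase_swap (fun i j => β i j • (T j *ᵥ (x i : Fin d → ℝ)))]
    exact Finset.sum_congr rfl fun i _ => Finset.sum_congr rfl fun j _ => by rw [hβ]
  have hkey : ∀ i : I, ∑ j ∈ Finset.univ.erase i,
      (β i j • (T i *ᵥ (x j : Fin d → ℝ)) - β i j • (T i *ᵥ (x i : Fin d → ℝ))) = 0 := by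
    intro i
    have hterm : ∀ j : I, β i j • (T i *ᵥ (x j : Fin d → ℝ)) - β i j • (T i *ᵥ (x i : Fin d → ℝ))
        = (T i).mulVecLin (β i j • ((x j : Fin d → ℝ) - (x i : Fin d → ℝ))) := by
      intro j
      rw [_root_.map_smul, map_sub, smul_sub]
      rfl
    rw [Finset.sum_congr rfl fun j _ => hterm j, ← map_sum]
    have h0 : (∑ j ∈ Finset.univ.erase i,
        β i j • ((x j : Fin d → ℝ) - (x i : Fin d → ℝ))) = 0 := by
      have := congrArg WithLp.ofLp (hclosed i)
      simpa [WithLp.ofLp_sum, WithLp.ofLp_smul, WithLp.ofLp_sub] using this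
    rw [h0, map_zero]
  calc ∑ i : I, ∑ j ∈ Finset.univ.erase i,
        β i j • ((T i - T j) *ᵥ (fun k => m i j k - x i k))
      = (∑ i : I, ∑ j ∈ Finset.univ.erase i, β i j • ((T i - T j) *ᵥ (m i j : Fin d → ℝ)))
        - ∑ i : I, ∑ j ∈ Finset.univ.erase i,
            (β i j • (T i *ᵥ (x i : Fin d → ℝ)) - β i j • (T j *ᵥ (x i : Fin d → ℝ))) := by
        rw [← sum_erase_split]
        exact Finset.sum_congr rfl fun i _ => Finset.sum_congr rfl fun j _ => hdec i j
    _ = 0 - ((∑ i : I, ∑ j ∈ Finset.univ.erase i, β i j • (T i *ᵥ (x i : Fin d → ℝ)))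
        - ∑ i : I, ∑ j ∈ Finset.univ.erase i, β i j • (T j *ᵥ (x i : Fin d → ℝ))) := by
        rw [hA, sum_erase_split]
    _ = ∑ i : I, ∑ j ∈ Finset.univ.erase i,
          (β i j • (T i *ᵥ (x j : Fin d → ℝ)) - β i j • (T i *ᵥ (x i : Fin d → ℝ))) := by
        rw [hC, zero_sub, neg_sub, sum_erase_split]
    _ = 0 := by
        rw [Finset.sum_congr rfl fun i _ => hkey i, Finset.sum_const, smul_zero]

/-- If every cell satisfies the closedness condition `Σ_{j≠i} β_{ij}(x_j − x_i) = 0`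
(i.e. `⟨∇*1⟩_i = 0`), then the total discrete force vanishes for any matrix field `T`
and any positive volumes: the semi-discrete scheme conserves linear momentum. -/
theorem total_discrete_force_vanishes {d : ℕ} {I : Type*} [Fintype I] [DecidableEq I]
    (x : I → EuclideanSpace ℝ (Fin d)) (β : I → I → ℝ) (m : I → I → EuclideanSpace ℝ (Fin d))
    (hβ : ∀ i j, β i j = β j i) (hm : ∀ i j, m i j = m j i)
    (hclosed : ∀ i : I, ∑ j ∈ Finset.univ.erase i, β i j • (x j - x i) = 0)
    (T : I → Matrix (Fin d) (Fin d) ℝ) :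
    (∑ i : I, ∑ j ∈ Finset.univ.erase i,
        β i j • ((T i - T j) *ᵥ (fun k => m i j k - x i k)) = 0) ∧
    ∀ V : I → ℝ, (∀ i, 0 < V i) →
      ∑ i : I, V i • discreteTensorDiv x β m V T i = 0 := by
  have hmain := total_force_aux x β m hβ hm hclosed T
  refine ⟨hmain, fun V hV => ?_⟩
  have hterm : ∀ i : I, V i • discreteTensorDiv x β m V T i
      = - ∑ j ∈ Finset.univ.erase i, β i j • ((T i - T j) *ᵥ (fun k => m i j k - x i k)) := by
    intro i
    unfold discreteTensorDiv
    rw [smul_smul]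
    have : V i * -(V i)⁻¹ = -1 := by
      field_simp [(hV i).ne']
    rw [this, neg_one_smul]
  rw [Finset.sum_congr rfl fun i _ => hterm i, Finset.sum_neg_distrib, hmain, neg_zero]
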